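/- Let g ∈ M_D(ℝ) be symmetric invertible, b antisymmetric, ℰ := g + b. Let F be the 2D×D block matrix F = [[ℰ],[I]] (upper block ℰ, lower block the identity). Then F g⁻¹ Fᵀ − η = ℋ', where η = [[0,I],[I,0]] and ℋ' = [[g − bg⁻¹b, bg⁻¹],[−g⁻¹b, g⁻¹]] is the generalized metric with upper indices (ℋ' = η ℋ η with ℋ = [[g⁻¹, −g⁻¹b],[bg⁻¹, g − bg⁻¹b]]). -/

import Mathlib

open Matrix

theorem vielbein_identity (D : ℕ) (g b : Matrix (Fin D) (Fin D) ℝ)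
    (hg : gᵀ = g) (hginv : IsUnit g) (hb : bᵀ = -b) :
    let E : Matrix (Fin D) (Fin D) ℝ := g + b
    let F : Matrix (Fin D ⊕ Fin D) (Fin D) ℝ := Matrix.fromRows E 1
    let η : Matrix (Fin D ⊕ Fin D) (Fin D ⊕ Fin D) ℝ := Matrix.fromBlocks 0 1 1 0
    F * g⁻¹ * Fᵀ - η =
      Matrix.fromBlocks (g - b * g⁻¹ * b) (b * g⁻¹) (-(g⁻¹ * b)) g⁻¹ := by
  intro E F η
  have hdet : IsUnit g.det := (Matrix.isUnit_iff_isUnit_det g).mp hginv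
  have hgg : g * g⁻¹ = 1 := mul_nonsing_inv g hdet
  have hgg' : g⁻¹ * g = 1 := nonsing_inv_mul g hdet
  have hFt : Fᵀ = Matrix.fromCols Eᵀ 1 := by
    simp [F, Matrix.transpose_fromRows]
  have hEt : Eᵀ = g - b := by
    simp [E, Matrix.transpose_add, hg, hb, sub_eq_add_neg]
  rw [hFt, Matrix.fromRows_mul, Matrix.fromRows_mul_fromCols]
  have h11 : E * g⁻¹ * Eᵀ = g - b * g⁻¹ * b := by
    rw [hEt]
    show (g + b) * g⁻¹ * (g - b) = _
    simp only [mul_sub, add_mul, Matrix.mul_assoc, hgg', mul_one]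
    rw [← Matrix.mul_assoc g g⁻¹ b, hgg, one_mul]
    abel
  have h12 : E * g⁻¹ * 1 = 1 + b * g⁻¹ := by
    show (g + b) * g⁻¹ * 1 = _
    rw [mul_one, add_mul, hgg]
  have h21 : 1 * g⁻¹ * Eᵀ = 1 - g⁻¹ * b := by
    rw [hEt, one_mul, mul_sub, hgg']
  have h22 : (1 : Matrix (Fin D) (Fin D) ℝ) * g⁻¹ * 1 = g⁻¹ := by
    rw [one_mul, mul_one]
  rw [h11, h12, h21, h22]
  show _ - Matrix.fromBlocks 0 1 1 0 = _
  rw [sub_eq_iff_eq_add, Matrix.fromBlocks_add, add_zero]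
  abel_nf
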